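/- arXiv:2410.00505 — 8 statements merged into one kernel-verified Lean document; each statement's English description precedes it below -/
import Mathlib

section
/- Let A be an n×n nonnegative irreducible matrix and z a strictly positive vector in R^n. Then there exists a strictly positive vector p in R^n such that for every k, z_k / (Σ_i a_{ki} z_i) = p_k / (Σ_s a_{sk} p_s). -/
open Matrix


/-- A nonnegative matrix is irreducible if some power connects every pair of indices. -/
def MatIrreducible {n : ℕ} (A : Matrix (Fin n) (Fin n) ℝ) : Prop :=
  ∀ i j, ∃ m : ℕ, 0 < m ∧ 0 < (A ^ m) i j

lemma aux_pow_nonneg {n : ℕ} (B : Matrix (Fin n) (Fin n) ℝ)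
    (hB : ∀ i j, 0 ≤ B i j) (m : ℕ) : ∀ i j, 0 ≤ (B ^ m) i j := by
  induction m with
  | zero =>
      intro i j
      rw [pow_zero]
      by_cases h : i = j <;> simp [Matrix.one_apply, h]
  | succ m ih =>
      intro i j
      rw [pow_succ, Matrix.mul_apply]
      exact Finset.sum_nonneg fun l _ => mul_nonneg (ih i l) (hB l j)

lemma aux_pow_pos {n : ℕ} (A B : Matrix (Fin n) (Fin n) ℝ)
    (hA : ∀ i j, 0 ≤ A i j) (hB : ∀ i j, 0 ≤ B i j)
    (h : ∀ i j, 0 < A i j → 0 < B i j) (m : ℕ) :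
    ∀ i j, 0 < (A ^ m) i j → 0 < (B ^ m) i j := by
  induction m with
  | zero =>
      intro i j hpos
      rw [pow_zero] at hpos ⊢
      rcases eq_or_ne i j with rfl | hne
      · simp [Matrix.one_apply]
      · simp [Matrix.one_apply, hne] at hpos
  | succ m ih =>
      intro i j hpos
      rw [pow_succ', Matrix.mul_apply] at hpos
      obtain ⟨l, _, hl⟩ : ∃ l ∈ Finset.univ, 0 < A i l * (A ^ m) l j := by
        by_contra hcon
        push_neg at hcon
        have hle : (∑ l, A i l * (A ^ m) l j) ≤ 0 :=
          Finset.sum_nonpos fun l hl => hcon l hl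
        linarith
      have hAil : 0 < A i l := by
        rcases mul_pos_iff.mp hl with ⟨h1, _⟩ | ⟨h1, _⟩
        · exact h1
        · exact absurd h1 (not_lt.mpr (hA i l))
      have hAm : 0 < (A ^ m) l j := by
        rcases mul_pos_iff.mp hl with ⟨_, h2⟩ | ⟨h1, _⟩
        · exact h2
        · exact absurd h1 (not_lt.mpr (hA i l))
      have hterm : 0 < B i l * (B ^ m) l j := mul_pos (h i l hAil) (ih l j hAm)
      rw [pow_succ', Matrix.mul_apply]
      refine lt_of_lt_of_le hterm ?_
      exact Finset.single_le_sum
        (fun s _ => mul_nonneg (hB i s) (aux_pow_nonneg B hB m s j))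
        (Finset.mem_univ l)

theorem stmt0 {n : ℕ} (A : Matrix (Fin n) (Fin n) ℝ)
    (hA : ∀ i j, 0 ≤ A i j) (hirr : MatIrreducible A)
    (z : Fin n → ℝ) (hz : ∀ i, 0 < z i) :
    ∃ p : Fin n → ℝ, (∀ i, 0 < p i) ∧
      ∀ k, z k / (∑ i, A k i * z i) = p k / (∑ s, A s k * p s) := by
  rcases Nat.eq_zero_or_pos n with hn | hn
  · subst hn
    exact ⟨fun _ => 1, fun i => i.elim0, fun k => k.elim0⟩
  -- denominators are positive
  have hS : ∀ k, 0 < ∑ i, A k i * z i := by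
    intro k
    obtain ⟨m, hm, hpos⟩ := hirr k k
    have hrow : ∃ i, 0 < A k i := by
      by_contra hcon
      push_neg at hcon
      have hzero : ∀ i, A k i = 0 := fun i => le_antisymm (hcon i) (hA k i)
      obtain ⟨m', rfl⟩ := Nat.exists_eq_succ_of_ne_zero hm.ne'
      rw [pow_succ', Matrix.mul_apply] at hpos
      simp [hzero] at hpos
    obtain ⟨i, hi⟩ := hrow
    exact lt_of_lt_of_le (mul_pos hi (hz i))
      (Finset.single_le_sum (fun s _ => mul_nonneg (hA k s) (hz s).le)
        (Finset.mem_univ i))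
  set c : Fin n → ℝ := fun k => z k / ∑ i, A k i * z i with hcdef
  have hc : ∀ k, 0 < c k := fun k => div_pos (hz k) (hS k)
  set B : Matrix (Fin n) (Fin n) ℝ := Matrix.of fun k i => c k * A k i with hBdef
  have hBapp : ∀ k i, B k i = c k * A k i := fun k i => rfl
  have hBnn : ∀ i j, 0 ≤ B i j := fun i j => mul_nonneg (hc i).le (hA i j)
  have hBpos : ∀ i j, 0 < A i j → 0 < B i j := fun i j hij => mul_pos (hc i) hij
  have hBz : B *ᵥ z = z := by
    funext k
    show ∑ i, B k i * z i = z k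
    have : ∀ i, B k i * z i = c k * (A k i * z i) := fun i => by
      rw [hBapp, mul_assoc]
    rw [Finset.sum_congr rfl fun i _ => this i, ← Finset.mul_sum, hcdef]
    exact div_mul_cancel₀ _ (hS k).ne'
  -- det (1 - Bᵀ) = 0
  have hzne : z ≠ 0 := by
    intro h
    exact (hz ⟨0, hn⟩).ne' (congrFun h ⟨0, hn⟩)
  have hdet : (1 - B).det = 0 := by
    rw [← Matrix.exists_mulVec_eq_zero_iff]
    exact ⟨z, hzne, by rw [Matrix.sub_mulVec, Matrix.one_mulVec, hBz, sub_self]⟩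
  have hdetT : (1 - Bᵀ).det = 0 := by
    have h1 : (1 - Bᵀ) = (1 - B)ᵀ := by
      rw [Matrix.transpose_sub, Matrix.transpose_one]
    rw [h1, Matrix.det_transpose]
    exact hdet
  obtain ⟨y, hy0, hy⟩ := (Matrix.exists_mulVec_eq_zero_iff).mpr hdetT
  have hyfix : ∀ k, y k = ∑ s, B s k * y s := by
    rw [Matrix.sub_mulVec, Matrix.one_mulVec, sub_eq_zero] at hy
    intro k
    calc y k = (Bᵀ *ᵥ y) k := by rw [← hy]
    _ = ∑ s, B s k * y s := by
        simp [Matrix.mulVec, dotProduct, Matrix.transpose_apply]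
  set w : Fin n → ℝ := fun i => |y i| with hwdef
  have hwnn : ∀ i, 0 ≤ w i := fun i => abs_nonneg _
  have hw_le : ∀ k, w k ≤ ∑ s, B s k * w s := by
    intro k
    have h1 : w k = |∑ s, B s k * y s| := by rw [hwdef]; simp [← hyfix k]
    rw [h1]
    refine (Finset.abs_sum_le_sum_abs _ _).trans (le_of_eq ?_)
    refine Finset.sum_congr rfl fun s _ => ?_
    rw [abs_mul, abs_of_nonneg (hBnn s k)]
  have hsum : ∑ k, z k * (∑ s, B s k * w s) = ∑ k, z k * w k := by
    have h1 : ∀ k, z k * (∑ s, B s k * w s) = ∑ s, (B s k * z k) * w s := by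
      intro k
      rw [Finset.mul_sum]
      exact Finset.sum_congr rfl fun s _ => by ring
    rw [Finset.sum_congr rfl fun k _ => h1 k, Finset.sum_comm]
    refine Finset.sum_congr rfl fun s _ => ?_
    have h2 : ∑ k, (B s k * z k) * w s = (∑ k, B s k * z k) * w s := by
      rw [Finset.sum_mul]
    rw [h2]
    have h3 : ∑ k, B s k * z k = z s := congrFun hBz s
    rw [h3, mul_comm]
  have hfix : ∀ k, ∑ s, B s k * w s = w k := by
    intro k
    have hnonneg : ∀ k ∈ Finset.univ, (0:ℝ) ≤ z k * ((∑ s, B s k * w s) - w k) :=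
      fun k _ => mul_nonneg (hz k).le (sub_nonneg.mpr (hw_le k))
    have hzero : ∑ k, z k * ((∑ s, B s k * w s) - w k) = 0 := by
      have : ∀ k, z k * ((∑ s, B s k * w s) - w k)
          = z k * (∑ s, B s k * w s) - z k * w k := fun k => by ring
      rw [Finset.sum_congr rfl fun k _ => this k, Finset.sum_sub_distrib, hsum,
        sub_self]
    have := (Finset.sum_eq_zero_iff_of_nonneg hnonneg).mp hzero k (Finset.mem_univ k)
    have hdiff : (∑ s, B s k * w s) - w k = 0 := by
      rcases mul_eq_zero.mp this with h | h
      · exact absurd h (hz k).ne'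
      · exact h
    linarith
  -- iterate the fixed point
  have hiter : ∀ m k, ∑ s, (B ^ m) s k * w s = w k := by
    intro m
    induction m with
    | zero =>
        intro k
        simp [Matrix.one_apply]
    | succ m ih =>
        intro k
        have h1 : ∀ s, (B ^ (m+1)) s k = ∑ l, (B ^ m) s l * B l k := by
          intro s
          rw [pow_succ, Matrix.mul_apply]
        calc ∑ s, (B ^ (m+1)) s k * w s
            = ∑ s, ∑ l, ((B ^ m) s l * w s) * B l k := by
              refine Finset.sum_congr rfl fun s _ => ?_
              rw [h1, Finset.sum_mul]
              exact Finset.sum_congr rfl fun l _ => by ring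
          _ = ∑ l, (∑ s, (B ^ m) s l * w s) * B l k := by
              rw [Finset.sum_comm]
              exact Finset.sum_congr rfl fun l _ => by rw [Finset.sum_mul]
          _ = ∑ l, B l k * w l := by
              refine Finset.sum_congr rfl fun l _ => ?_
              rw [ih l, mul_comm]
          _ = w k := hfix k
  -- w is strictly positive
  obtain ⟨i0, hi0⟩ : ∃ i0, y i0 ≠ 0 := Function.ne_iff.mp hy0
  have hwi0 : 0 < w i0 := abs_pos.mpr hi0
  have hwpos : ∀ k, 0 < w k := by
    intro k
    obtain ⟨m, _, hAm⟩ := hirr i0 k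
    have hBm : 0 < (B ^ m) i0 k := aux_pow_pos A B hA hBnn hBpos m i0 k hAm
    rw [← hiter m k]
    refine Finset.sum_pos' (fun s _ => mul_nonneg (aux_pow_nonneg B hBnn m s k) (hwnn s))
      ⟨i0, Finset.mem_univ i0, mul_pos hBm hwi0⟩
  -- conclusion
  refine ⟨fun k => c k * w k, fun k => mul_pos (hc k) (hwpos k), fun k => ?_⟩
  have hden : ∑ s, A s k * (c s * w s) = w k := by
    rw [← hfix k]
    exact Finset.sum_congr rfl fun s _ => by rw [hBapp]; ring
  rw [hden, mul_div_assoc, div_self (hwpos k).ne', mul_one]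
end

section
/- Let C be a nonnegative n×l matrix with strictly positive row and column sums, b a strictly positive vector, d_i = min_{k: c_{ki}>0} b_k / c_{ki}, and Z₀ the set of nonnegative z with Cz ≤ b and min_k b_k/[Cz]_k = 1 (i.e., equality holds in at least one coordinate). Then every z ∈ Z₀ with z ≠ 0 can be written as z_i = c(α) α_i d_i where α_i = (z_i/d_i)/(Σ_j z_j/d_j) lies in the simplex Q and c(α) = min_k b_k/[Σ_i α_i d_i c_i]_k; conversely for every α ∈ Q the vector (c(α) α_i d_i)_i is a nonnegative solution of Cz ≤ b with equality in at least one coordinate. -/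
/-- `dmin C b i = min_{k : C k i > 0} b k / C k i`, realized as an infimum. -/
noncomputable def dmin {n l : ℕ} (C : Matrix (Fin n) (Fin l) ℝ) (b : Fin n → ℝ)
    (i : Fin l) : ℝ :=
  sInf {r : ℝ | ∃ k, 0 < C k i ∧ r = b k / C k i}

/-- `cfun C b α = min_{k : [Σ_i α_i d_i c_i]_k > 0} b k / [Σ_i α_i d_i c_i]_k`. -/
noncomputable def cfun {n l : ℕ} (C : Matrix (Fin n) (Fin l) ℝ) (b : Fin n → ℝ)
    (α : Fin l → ℝ) : ℝ :=
  sInf {r : ℝ | ∃ k, 0 < ∑ i, α i * dmin C b i * C k i ∧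
      r = b k / ∑ i, α i * dmin C b i * C k i}

lemma aux_finite {n : ℕ} (f : Fin n → ℝ) (P : Fin n → Prop) :
    {r : ℝ | ∃ k, P k ∧ r = f k}.Finite :=
  (Set.finite_range f).subset (by rintro r ⟨k, _, rfl⟩; exact ⟨k, rfl⟩)

lemma aux_mem {n : ℕ} (f : Fin n → ℝ) (P : Fin n → Prop) (h : ∃ k, P k) :
    ∃ k, P k ∧ sInf {r : ℝ | ∃ k, P k ∧ r = f k} = f k := by
  obtain ⟨k0, hk0⟩ := h
  have hne : {r : ℝ | ∃ k, P k ∧ r = f k}.Nonempty := ⟨f k0, k0, hk0, rfl⟩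
  exact hne.csInf_mem (aux_finite f P)

lemma aux_le {n : ℕ} (f : Fin n → ℝ) (P : Fin n → Prop) (k : Fin n) (hk : P k) :
    sInf {r : ℝ | ∃ k, P k ∧ r = f k} ≤ f k :=
  csInf_le (aux_finite f P).bddBelow ⟨k, hk, rfl⟩

lemma dmin_mem {n l : ℕ} (C : Matrix (Fin n) (Fin l) ℝ)
    (hC : ∀ k i, 0 ≤ C k i) (hcol : ∀ i, 0 < ∑ k, C k i)
    (b : Fin n → ℝ) (i : Fin l) :
    ∃ k, 0 < C k i ∧ dmin C b i = b k / C k i := by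
  have hex : ∃ k, 0 < C k i := by
    by_contra h
    push_neg at h
    exact absurd (Finset.sum_nonpos fun k _ => h k) (not_le.2 (hcol i))
  exact aux_mem (fun k => b k / C k i) (fun k => 0 < C k i) hex

lemma dmin_pos {n l : ℕ} (C : Matrix (Fin n) (Fin l) ℝ)
    (hC : ∀ k i, 0 ≤ C k i) (hcol : ∀ i, 0 < ∑ k, C k i)
    (b : Fin n → ℝ) (hb : ∀ k, 0 < b k) (i : Fin l) : 0 < dmin C b i := by
  obtain ⟨k, hk, heq⟩ := dmin_mem C hC hcol b i
  rw [heq]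
  exact div_pos (hb k) hk

lemma dmin_le {n l : ℕ} (C : Matrix (Fin n) (Fin l) ℝ)
    (hC : ∀ k i, 0 ≤ C k i) (hcol : ∀ i, 0 < ∑ k, C k i)
    (b : Fin n → ℝ) (hb : ∀ k, 0 < b k) (k : Fin n) (i : Fin l) :
    dmin C b i * C k i ≤ b k := by
  rcases lt_or_eq_of_le (hC k i) with h | h
  · have := aux_le (fun k => b k / C k i) (fun k => 0 < C k i) k h
    calc dmin C b i * C k i ≤ (b k / C k i) * C k i := by
          exact mul_le_mul_of_nonneg_right this (le_of_lt h)
      _ = b k := by field_simp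
  · rw [← h, mul_zero]; exact le_of_lt (hb k)

theorem stmt7 {n l : ℕ} (C : Matrix (Fin n) (Fin l) ℝ)
    (hC : ∀ k i, 0 ≤ C k i)
    (hrow : ∀ k, 0 < ∑ i, C k i) (hcol : ∀ i, 0 < ∑ k, C k i)
    (b : Fin n → ℝ) (hb : ∀ k, 0 < b k) :
    (∀ z : Fin l → ℝ, (∀ i, 0 ≤ z i) → (∀ k, ∑ i, C k i * z i ≤ b k) →
      (∃ k, ∑ i, C k i * z i = b k) → z ≠ 0 →
      (∀ i, 0 ≤ (z i / dmin C b i) / ∑ j, z j / dmin C b j) ∧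
      (∑ i, (z i / dmin C b i) / ∑ j, z j / dmin C b j) = 1 ∧
      (∀ i, z i =
        cfun C b (fun i' => (z i' / dmin C b i') / ∑ j, z j / dmin C b j) *
          ((z i / dmin C b i) / ∑ j, z j / dmin C b j) * dmin C b i)) ∧
    (∀ α : Fin l → ℝ, (∀ i, 0 ≤ α i) → (∑ i, α i = 1) →
      (∀ i, 0 ≤ cfun C b α * α i * dmin C b i) ∧
      (∀ k, ∑ i, C k i * (cfun C b α * α i * dmin C b i) ≤ b k) ∧
      (∃ k, ∑ i, C k i * (cfun C b α * α i * dmin C b i) = b k)) := by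
  have hd : ∀ i, 0 < dmin C b i := dmin_pos C hC hcol b hb
  constructor
  · -- part 1
    intro z hz hzle hzeq hz0
    set d : Fin l → ℝ := dmin C b with hdd
    set S : ℝ := ∑ j, z j / d j with hS
    have hSpos : 0 < S := by
      obtain ⟨i0, hi0⟩ : ∃ i, z i ≠ 0 := by
        by_contra h; push_neg at h; exact hz0 (funext h)
      have hzi0 : 0 < z i0 := lt_of_le_of_ne (hz i0) (Ne.symm hi0)
      apply Finset.sum_pos' (fun i _ => div_nonneg (hz i) (le_of_lt (hd i)))
      exact ⟨i0, Finset.mem_univ i0, div_pos hzi0 (hd i0)⟩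
    have hSne : S ≠ 0 := ne_of_gt hSpos
    refine ⟨fun i => div_nonneg (div_nonneg (hz i) (le_of_lt (hd i))) (le_of_lt hSpos), ?_, ?_⟩
    · rw [← Finset.sum_div]; field_simp; exact hS.symm
    · -- key: cfun at this α equals S
      set α : Fin l → ℝ := fun i' => (z i' / d i') / S with hα
      set w : Fin n → ℝ := fun k => ∑ i, C k i * z i with hw
      have hsk : ∀ k, (∑ i, α i * d i * C k i) = w k / S := by
        intro k
        rw [hw]
        simp only [Finset.sum_div]
        apply Finset.sum_congr rfl
        intro i _
        have : d i ≠ 0 := ne_of_gt (hd i)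
        field_simp [hα]
        simp only [hα]
        field_simp
      have hcfun : cfun C b α = S := by
        have hset : {r : ℝ | ∃ k, 0 < ∑ i, α i * d i * C k i ∧
            r = b k / ∑ i, α i * d i * C k i} =
            {r : ℝ | ∃ k, (0 < w k / S) ∧ r = b k / (w k / S)} := by
          ext r; simp only [Set.mem_setOf_eq, hsk]
        have hrw : cfun C b α = sInf {r : ℝ | ∃ k, (0 < w k / S) ∧ r = b k / (w k / S)} := by
          rw [cfun, hset]
        obtain ⟨k2, hk2⟩ := hzeq
        have hwk2 : w k2 = b k2 := hk2
        have hk2pos : 0 < w k2 / S := by rw [hwk2]; exact div_pos (hb k2) hSpos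
        have hmemval : b k2 / (w k2 / S) = S := by
          rw [hwk2, div_div_eq_mul_div, mul_comm, mul_div_assoc,
            div_self (ne_of_gt (hb k2)), mul_one]
        rw [hrw]
        apply le_antisymm
        · have := aux_le (fun k => b k / (w k / S)) (fun k => 0 < w k / S) k2 hk2pos
          simpa [hmemval] using this
        · have hne2 : {r : ℝ | ∃ k, (0 < w k / S) ∧ r = b k / (w k / S)}.Nonempty :=
            ⟨b k2 / (w k2 / S), k2, hk2pos, rfl⟩
          apply le_csInf hne2
          rintro r ⟨k, hkpos, rfl⟩
          have hwk : 0 < w k := by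
            by_contra h
            push_neg at h
            have : w k / S ≤ 0 := div_nonpos_of_nonpos_of_nonneg h (le_of_lt hSpos)
            exact absurd hkpos (not_lt.2 this)
          have hble : w k ≤ b k := hzle k
          rw [div_div_eq_mul_div, le_div_iff₀ hwk]
          calc S * w k ≤ S * b k := mul_le_mul_of_nonneg_left hble (le_of_lt hSpos)
            _ = b k * S := by ring
      intro i
      rw [hcfun]
      have : d i ≠ 0 := ne_of_gt (hd i)
      field_simp
  · -- part 2
    intro α hα hα1
    set d : Fin l → ℝ := dmin C b with hdd
    set s : Fin n → ℝ := fun k => ∑ i, α i * d i * C k i with hs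
    have hsnn : ∀ k, 0 ≤ s k := fun k =>
      Finset.sum_nonneg fun i _ =>
        mul_nonneg (mul_nonneg (hα i) (le_of_lt (hd i))) (hC k i)
    have hex : ∃ k, 0 < s k := by
      obtain ⟨i0, hi0⟩ : ∃ i, 0 < α i := by
        by_contra h; push_neg at h
        have : (∑ i, α i) ≤ 0 := Finset.sum_nonpos fun i _ => h i
        rw [hα1] at this; linarith
      obtain ⟨k0, hk0⟩ : ∃ k, 0 < C k i0 := by
        by_contra h; push_neg at h
        exact absurd (Finset.sum_nonpos fun k _ => h k) (not_le.2 (hcol i0))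
      refine ⟨k0, lt_of_lt_of_le ?_ (Finset.single_le_sum
        (fun i _ => mul_nonneg (mul_nonneg (hα i) (le_of_lt (hd i))) (hC k0 i))
        (Finset.mem_univ i0))⟩
      exact mul_pos (mul_pos hi0 (hd i0)) hk0
    obtain ⟨k1, hk1, hck1⟩ := aux_mem (fun k => b k / s k) (fun k => 0 < s k) hex
    have hceq : cfun C b α = b k1 / s k1 := hck1
    have hcpos : 0 < cfun C b α := by rw [hceq]; exact div_pos (hb k1) hk1
    have hsum : ∀ k, (∑ i, C k i * (cfun C b α * α i * d i)) = cfun C b α * s k := by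
      intro k
      rw [hs, Finset.mul_sum]
      exact Finset.sum_congr rfl fun i _ => by ring
    refine ⟨fun i => mul_nonneg (mul_nonneg (le_of_lt hcpos) (hα i)) (le_of_lt (hd i)), ?_, ?_⟩
    · intro k
      rw [hsum k]
      rcases lt_or_eq_of_le (hsnn k) with h | h
      · have hle : cfun C b α ≤ b k / s k :=
          aux_le (fun k => b k / s k) (fun k => 0 < s k) k h
        calc cfun C b α * s k ≤ (b k / s k) * s k :=
              mul_le_mul_of_nonneg_right hle (le_of_lt h)
          _ = b k := by field_simp
      · rw [← h, mul_zero]; exact le_of_lt (hb k)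
    · refine ⟨k1, ?_⟩
      rw [hsum k1, hceq]
      field_simp
end

section
/- Let A be an n×n nonnegative nonzero matrix and z a nonnegative vector such that b̄ = Az is strictly positive. Then there exists p in the simplex P = {p ≥ 0, Σ p_i = 1} such that z_i Σ_s a_{si} p_s = b̄_i p_i for all i = 1,…,n. -/
open Filter Finset Matrix

theorem stmt8 {n : ℕ} (A : Matrix (Fin n) (Fin n) ℝ)
    (hA : ∀ i j, 0 ≤ A i j) (hA0 : A ≠ 0)
    (z : Fin n → ℝ) (hz : ∀ i, 0 ≤ z i)
    (hbar : ∀ i, 0 < ∑ j, A i j * z j) :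
    ∃ p : Fin n → ℝ, (∀ i, 0 ≤ p i) ∧ (∑ i, p i = 1) ∧
      ∀ i, z i * (∑ s, A s i * p s) = (∑ j, A i j * z j) * p i := by
  classical
  have hn : 0 < n := by
    rcases Nat.eq_zero_or_pos n with h | h
    · exfalso; apply hA0; subst h; ext i j; exact i.elim0
    · exact h
  set b : Fin n → ℝ := fun i => ∑ j, A i j * z j with hbdef
  have hbpos : ∀ i, 0 < b i := hbar
  have hbne : ∀ i, b i ≠ 0 := fun i => (hbpos i).ne'
  set N : Matrix (Fin n) (Fin n) ℝ := fun i k => A i k * z k / b i with hNdef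
  have hNnn : ∀ i k, 0 ≤ N i k := fun i k =>
    div_nonneg (mul_nonneg (hA i k) (hz k)) (hbpos i).le
  have hNrow : ∀ i, ∑ k, N i k = 1 := by
    intro i
    have : ∑ k, N i k = (∑ k, A i k * z k) / b i := by
      rw [Finset.sum_div]
    rw [this, hbdef, div_self (hbne i)]
  -- the linear map q ↦ Nᵀ * q
  set L : (Fin n → ℝ) →ₗ[ℝ] (Fin n → ℝ) := (Nᵀ).mulVecLin with hLdef
  have hLapp : ∀ q k, L q k = ∑ s, N s k * q s := by
    intro q k
    simp [hLdef, Matrix.mulVecLin_apply, Matrix.mulVec, Matrix.vecMul,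
      dotProduct, Matrix.transpose_apply, mul_comm]
  have hLmem : ∀ q ∈ stdSimplex ℝ (Fin n), L q ∈ stdSimplex ℝ (Fin n) := by
    intro q hq
    obtain ⟨hq1, hq2⟩ := hq
    constructor
    · intro k
      rw [hLapp]
      exact Finset.sum_nonneg fun s _ => mul_nonneg (hNnn s k) (hq1 s)
    · have : ∑ k, L q k = ∑ s, q s * ∑ k, N s k := by
        simp only [hLapp, Finset.mul_sum]
        rw [Finset.sum_comm]
        congr 1; ext s; congr 1; ext k; ring
      rw [this]
      simp only [hNrow, mul_one]
      exact hq2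
  -- starting point and iterates
  set v₀ : Fin n → ℝ := fun _ => (n : ℝ)⁻¹ with hv₀def
  have hv₀ : v₀ ∈ stdSimplex ℝ (Fin n) := by
    constructor
    · intro i; positivity
    · simp [hv₀def, Finset.sum_const, Finset.card_univ]
      field_simp
  have hiter : ∀ k : ℕ, (L ^ k) v₀ ∈ stdSimplex ℝ (Fin n) := by
    intro k
    induction k with
    | zero => simpa using hv₀
    | succ k ih =>
      have : (L ^ (k + 1)) v₀ = L ((L ^ k) v₀) := by
        rw [pow_succ']; rfl
      rw [this]; exact hLmem _ ih
  -- Cesàro averages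
  set v : ℕ → (Fin n → ℝ) := fun m =>
    ((m : ℝ) + 1)⁻¹ • ∑ k ∈ Finset.range (m + 1), (L ^ k) v₀ with hvdef
  have hvmem : ∀ m, v m ∈ stdSimplex ℝ (Fin n) := by
    intro m
    have h1 : v m = ∑ k ∈ Finset.range (m + 1), ((m : ℝ) + 1)⁻¹ • (L ^ k) v₀ := by
      rw [hvdef]; simp [Finset.smul_sum]
    rw [h1]
    refine (convex_stdSimplex ℝ (Fin n)).sum_mem (fun i _ => by positivity) ?_
      (fun i _ => hiter i)
    rw [Finset.sum_const, Finset.card_range, nsmul_eq_mul]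
    push_cast
    field_simp
  obtain ⟨q, hqmem, φ, hφ, hconv⟩ :=
    (isCompact_stdSimplex ℝ (Fin n)).tendsto_subseq hvmem
  -- the key identity for the difference
  have hdiff : ∀ m, L (v m) - v m = ((m : ℝ) + 1)⁻¹ • ((L ^ (m + 1)) v₀ - v₀) := by
    intro m
    have hL : L (v m) = ((m : ℝ) + 1)⁻¹ •
        ∑ k ∈ Finset.range (m + 1), (L ^ (k + 1)) v₀ := by
      rw [hvdef, _root_.map_smul, map_sum]
      congr 1
      refine Finset.sum_congr rfl fun k _ => ?_
      rw [pow_succ']; rfl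
    rw [hL, hvdef, ← smul_sub, ← Finset.sum_sub_distrib,
      Finset.sum_range_sub (fun k => (L ^ k) v₀)]
    simp
  -- norm bound for simplex elements
  have hnorm : ∀ x ∈ stdSimplex ℝ (Fin n), ‖x‖ ≤ 1 := by
    intro x hx
    rw [pi_norm_le_iff_of_nonneg zero_le_one]
    intro i
    rw [Real.norm_eq_abs, abs_of_nonneg (hx.1 i)]
    calc x i ≤ ∑ j, x j := Finset.single_le_sum (fun j _ => hx.1 j) (Finset.mem_univ i)
    _ = 1 := hx.2
  -- the difference along the subsequence tends to 0
  have hzero : Tendsto (fun m => L (v (φ m)) - v (φ m)) atTop (nhds 0) := by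
    have heq : (fun m => L (v (φ m)) - v (φ m)) =
        fun m => ((φ m : ℝ) + 1)⁻¹ • ((L ^ (φ m + 1)) v₀ - v₀) := by
      funext m; exact hdiff (φ m)
    rw [heq]
    refine Tendsto.zero_smul_isBoundedUnder_le ?_ ?_
    · have h1 : Tendsto (fun m => (φ m : ℝ) + 1) atTop atTop :=
        tendsto_atTop_add_const_right _ 1
          (tendsto_natCast_atTop_atTop.comp hφ.tendsto_atTop)
      exact tendsto_inv_atTop_zero.comp h1
    · refine isBoundedUnder_of ⟨2, fun m => ?_⟩
      calc ‖(L ^ (φ m + 1)) v₀ - v₀‖ ≤ ‖(L ^ (φ m + 1)) v₀‖ + ‖v₀‖ := norm_sub_le _ _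
      _ ≤ 1 + 1 := add_le_add (hnorm _ (hiter _)) (hnorm _ hv₀)
      _ = 2 := by norm_num
  -- the difference also tends to L q - q
  have hLcont : Continuous L := L.continuous_of_finiteDimensional
  have hlim : Tendsto (fun m => L (v (φ m)) - v (φ m)) atTop (nhds (L q - q)) :=
    ((hLcont.tendsto q).comp hconv).sub hconv
  have hfix : L q = q := by
    have := tendsto_nhds_unique hlim hzero
    rwa [sub_eq_zero] at this
  have hfixk : ∀ k, ∑ s, (A s k * z k / b s) * q s = q k := by
    intro k
    have := congrFun hfix k
    rwa [hLapp] at this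
  -- build p
  set c : ℝ := ∑ i, q i / b i with hcdef
  have hqpos : ∃ i, 0 < q i := by
    by_contra h
    push_neg at h
    have h1 : ∑ i, q i ≤ 0 := Finset.sum_nonpos fun i _ => h i
    rw [hqmem.2] at h1
    linarith
  obtain ⟨i₀, hi₀⟩ := hqpos
  have hcpos : 0 < c := by
    refine Finset.sum_pos' (fun i _ => div_nonneg (hqmem.1 i) (hbpos i).le)
      ⟨i₀, Finset.mem_univ i₀, div_pos hi₀ (hbpos i₀)⟩
  have hcne : c ≠ 0 := hcpos.ne'
  refine ⟨fun i => q i / b i / c, ?_, ?_, ?_⟩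
  · intro i
    exact div_nonneg (div_nonneg (hqmem.1 i) (hbpos i).le) hcpos.le
  · rw [← Finset.sum_div, ← hcdef, div_self hcne]
  · intro k
    have h1 : z k * ∑ s, A s k * (q s / b s / c) = q k / c := by
      rw [Finset.mul_sum]
      have h2 : ∀ s, z k * (A s k * (q s / b s / c)) = ((A s k * z k / b s) * q s) / c := by
        intro s
        field_simp
      calc ∑ s, z k * (A s k * (q s / b s / c))
          = ∑ s, ((A s k * z k / b s) * q s) / c := Finset.sum_congr rfl fun s _ => h2 s
        _ = (∑ s, (A s k * z k / b s) * q s) / c := by rw [Finset.sum_div]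
        _ = q k / c := by rw [hfixk k]
    have h2 : b k * (q k / b k / c) = q k / c := by
      rw [div_div, mul_div_assoc']
      exact mul_div_mul_left _ _ (hbne k)
    rw [h1]
    exact h2.symm
end

section
/- Let A be an n×n nonnegative irreducible productive matrix and x a strictly positive solution of x = Ax + c with c strictly positive (x_k = Σ_i a_{ki} x_i + c_k, c_k > 0). Let p⁰ > 0 satisfy p⁰_k / (Σ_s a_{sk} p⁰_s) = x_k / (Σ_i a_{ki} x_i) for all k (such p⁰ exists). Then for every i, p⁰_i − Σ_s a_{si} p⁰_s = p⁰_i (1 − Σ_j a_{ij} x_j / x_i) > 0, i.e., the added value in every industry is strictly positive. -/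
def Productive {n : ℕ} (A : Matrix (Fin n) (Fin n) ℝ) : Prop :=
  ∃ B : Matrix (Fin n) (Fin n) ℝ, (∀ i j, 0 ≤ B i j) ∧ (1 - A) * B = 1 ∧ B * (1 - A) = 1

lemma col_pos {n : ℕ} (A : Matrix (Fin n) (Fin n) ℝ) (hA : ∀ i j, 0 ≤ A i j)
    {i j : Fin n} {m : ℕ} (hm : 0 < m) (hpos : 0 < (A ^ m) i j) :
    ∃ s, 0 < A s j := by
  obtain ⟨k, rfl⟩ := Nat.exists_eq_succ_of_ne_zero hm.ne'
  rw [pow_succ, Matrix.mul_apply] at hpos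
  by_contra h
  push_neg at h
  have : ∀ s, A s j = 0 := fun s => le_antisymm (h s) (hA s j)
  simp [this] at hpos

lemma row_pos {n : ℕ} (A : Matrix (Fin n) (Fin n) ℝ) (hA : ∀ i j, 0 ≤ A i j)
    {i j : Fin n} {m : ℕ} (hm : 0 < m) (hpos : 0 < (A ^ m) i j) :
    ∃ s, 0 < A i s := by
  obtain ⟨k, rfl⟩ := Nat.exists_eq_succ_of_ne_zero hm.ne'
  rw [pow_succ', Matrix.mul_apply] at hpos
  by_contra h
  push_neg at h
  have : ∀ s, A i s = 0 := fun s => le_antisymm (h s) (hA i s)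
  simp [this] at hpos

theorem stmt11 {n : ℕ} (A : Matrix (Fin n) (Fin n) ℝ)
    (hA : ∀ i j, 0 ≤ A i j) (hirr : MatIrreducible A) (hprod : Productive A)
    (c : Fin n → ℝ) (hc : ∀ k, 0 < c k)
    (x : Fin n → ℝ) (hx : ∀ k, 0 < x k)
    (hbal : ∀ k, x k = (∑ i, A k i * x i) + c k)
    (p : Fin n → ℝ) (hp : ∀ k, 0 < p k)
    (hprop : ∀ k, p k / (∑ s, A s k * p s) = x k / (∑ i, A k i * x i)) :
    ∀ i, p i - (∑ s, A s i * p s) = p i * (1 - (∑ j, A i j * x j) / x i) ∧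
      0 < p i - (∑ s, A s i * p s) := by
  intro i
  obtain ⟨m, hm, hmp⟩ := hirr i i
  obtain ⟨s₀, hs₀⟩ := col_pos A hA hm hmp
  obtain ⟨j₀, hj₀⟩ := row_pos A hA hm hmp
  set S := ∑ s, A s i * p s with hS
  set T := ∑ j, A i j * x j with hT
  have hSpos : 0 < S :=
    Finset.sum_pos' (fun s _ => mul_nonneg (hA s i) (hp s).le)
      ⟨s₀, Finset.mem_univ _, mul_pos hs₀ (hp s₀)⟩
  have hTpos : 0 < T :=
    Finset.sum_pos' (fun j _ => mul_nonneg (hA i j) (hx j).le)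
      ⟨j₀, Finset.mem_univ _, mul_pos hj₀ (hx j₀)⟩
  have hTx : T < x i := by
    have := hbal i
    rw [← hT] at this
    linarith [hc i]
  have hratio := hprop i
  rw [← hS, ← hT, div_eq_div_iff hSpos.ne' hTpos.ne'] at hratio
  have hSval : S = p i * T / x i := by
    rw [eq_div_iff (hx i).ne']
    linarith [hratio]
  have heq : p i - S = p i * (1 - T / x i) := by
    rw [hSval]; ring
  refine ⟨heq, ?_⟩
  rw [heq]
  have : T / x i < 1 := (div_lt_one (hx i)).mpr hTx
  have := hp i
  nlinarith
end

section
/- Let A be an n×n nonnegative irreducible matrix and x a strictly positive solution of x = Ax + c where c_k ≥ 0 for k ∈ I and c_k < 0 for k ∈ J, with J nonempty. Let p⁰ > 0 satisfy p⁰_k/(Σ_s a_{sk} p⁰_s) = x_k/(Σ_i a_{ki} x_i) for all k. Then p⁰_i − Σ_s a_{si} p⁰_s = p⁰_i (1 − Σ_j a_{ij} x_j / x_i) < 0 for every i ∈ J, i.e., industries in J produce negative added value. -/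
theorem stmt12 {n : ℕ} (A : Matrix (Fin n) (Fin n) ℝ)
    (hA : ∀ i j, 0 ≤ A i j) (hirr : MatIrreducible A)
    (I J : Finset (Fin n)) (hIJ : I ∪ J = Finset.univ) (hdisj : Disjoint I J)
    (hJne : J.Nonempty)
    (c : Fin n → ℝ) (hcI : ∀ k ∈ I, 0 ≤ c k) (hcJ : ∀ k ∈ J, c k < 0)
    (x : Fin n → ℝ) (hx : ∀ k, 0 < x k)
    (hbal : ∀ k, x k = (∑ i, A k i * x i) + c k)
    (p : Fin n → ℝ) (hp : ∀ k, 0 < p k)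
    (hprop : ∀ k, p k / (∑ s, A s k * p s) = x k / (∑ i, A k i * x i)) :
    ∀ i ∈ J, p i - (∑ s, A s i * p s) = p i * (1 - (∑ j, A i j * x j) / x i) ∧
      p i - (∑ s, A s i * p s) < 0 := by
  intro i hi
  set T := ∑ j, A i j * x j with hTdef
  set S := ∑ s, A s i * p s with hSdef
  have hci : c i < 0 := hcJ i hi
  have hxi : 0 < x i := hx i
  have hT : x i = T + c i := hbal i
  have hTpos : 0 < T := by linarith
  have hTgt : x i < T := by linarith
  have hSnonneg : 0 ≤ S := Finset.sum_nonneg fun s _ => mul_nonneg (hA s i) (hp s).le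
  have hRHS : 0 < x i / T := div_pos hxi hTpos
  have hSpos : 0 < S := by
    rcases hSnonneg.lt_or_eq with h | h
    · exact h
    · exfalso
      have h2 := hprop i
      rw [← hSdef, ← hTdef, ← h, div_zero] at h2
      linarith
  have hcross : p i * T = x i * S := by
    have h2 := hprop i
    rw [← hSdef, ← hTdef, div_eq_div_iff hSpos.ne' hTpos.ne'] at h2
    exact h2
  have heq : p i - S = p i * (1 - T / x i) := by
    field_simp
    nlinarith
  refine ⟨heq, ?_⟩
  rw [heq]
  have : 1 < T / x i := (one_lt_div hxi).mpr hTgt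
  exact mul_neg_of_pos_of_neg (hp i) (by linarith)
end

section
/- Let A be an n×n nonnegative irreducible matrix, x > 0 satisfying x = Ax + c, and p⁰ > 0 satisfying p⁰_i/(Σ_s a_{si} p⁰_s) = x_i/(Σ_j a_{ij} x_j) for all i. Then for every industry i, the added value Δ_i = x_i(p⁰_i − Σ_s a_{si} p⁰_s) equals the value of the final product C_i = p⁰_i c_i. -/
lemma col_ne_zero {n : ℕ} (A : Matrix (Fin n) (Fin n) ℝ)
    (hirr : MatIrreducible A) (i : Fin n) : ∃ s, A s i ≠ 0 := by
  by_contra h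
  push_neg at h
  obtain ⟨m, hm, hpos⟩ := hirr i i
  have hz : ∀ k, 0 < k → ∀ j, (A ^ k) j i = 0 := by
    intro k hk
    induction k with
    | zero => omega
    | succ k ih =>
      intro j
      rw [pow_succ, Matrix.mul_apply]
      simp [h]
  have := hz m hm i
  linarith

lemma row_ne_zero {n : ℕ} (A : Matrix (Fin n) (Fin n) ℝ)
    (hirr : MatIrreducible A) (i : Fin n) : ∃ s, A i s ≠ 0 := by
  by_contra h
  push_neg at h
  obtain ⟨m, hm, hpos⟩ := hirr i i
  have hz : ∀ k, 0 < k → ∀ j, (A ^ k) i j = 0 := by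
    intro k hk
    induction k with
    | zero => omega
    | succ k ih =>
      intro j
      rw [pow_succ', Matrix.mul_apply]
      simp [h]
  have := hz m hm i
  linarith

theorem stmt14 {n : ℕ} (A : Matrix (Fin n) (Fin n) ℝ)
    (hA : ∀ i j, 0 ≤ A i j) (hirr : MatIrreducible A)
    (c : Fin n → ℝ)
    (x : Fin n → ℝ) (hx : ∀ k, 0 < x k)
    (hbal : ∀ k, x k = (∑ i, A k i * x i) + c k)
    (p : Fin n → ℝ) (hp : ∀ k, 0 < p k)
    (hprop : ∀ i, p i / (∑ s, A s i * p s) = x i / (∑ j, A i j * x j)) :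
    ∀ i, x i * (p i - ∑ s, A s i * p s) = p i * c i := by
  intro i
  obtain ⟨s₀, hs₀⟩ := col_ne_zero A hirr i
  obtain ⟨t₀, ht₀⟩ := row_ne_zero A hirr i
  have hT : 0 < ∑ s, A s i * p s := by
    apply Finset.sum_pos' (fun s _ => mul_nonneg (hA s i) (hp s).le)
    exact ⟨s₀, Finset.mem_univ _, mul_pos (lt_of_le_of_ne (hA s₀ i) (Ne.symm hs₀)) (hp s₀)⟩
  have hS : 0 < ∑ j, A i j * x j := by
    apply Finset.sum_pos' (fun j _ => mul_nonneg (hA i j) (hx j).le)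
    exact ⟨t₀, Finset.mem_univ _, mul_pos (lt_of_le_of_ne (hA i t₀) (Ne.symm ht₀)) (hx t₀)⟩
  have hcross : p i * (∑ j, A i j * x j) = x i * (∑ s, A s i * p s) := by
    have := hprop i
    field_simp at this
    linarith
  have hb := hbal i
  linear_combination p i * hb + hcross
end

section
/- Let A be a nonnegative n×n matrix with strictly positive row and column sums, and b a strictly positive vector not in the cone generated by the columns of A. Let Z = {z ≥ 0 : Az ≤ b} and Z₀ = {z ∈ Z : min_k b_k/[Az]_k = 1} (solutions achieving equality in some coordinate). Then the infimum of Σ_k (b_k − [Az]_k)² over Z equals its infimum over Z₀, and this infimum is attained. -/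
theorem stmt17 {n : ℕ} (A : Matrix (Fin n) (Fin n) ℝ)
    (hA : ∀ i j, 0 ≤ A i j)
    (hrow : ∀ k, 0 < ∑ i, A k i) (hcol : ∀ i, 0 < ∑ k, A k i)
    (b : Fin n → ℝ) (hb : ∀ k, 0 < b k)
    (hcone : ¬ ∃ z : Fin n → ℝ, (∀ i, 0 ≤ z i) ∧ ∀ k, ∑ i, A k i * z i = b k) :
    ∃ z0 : Fin n → ℝ, (∀ i, 0 ≤ z0 i) ∧ (∀ k, ∑ i, A k i * z0 i ≤ b k) ∧
      (∃ k, ∑ i, A k i * z0 i = b k) ∧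
      ∀ z : Fin n → ℝ, (∀ i, 0 ≤ z i) → (∀ k, ∑ i, A k i * z i ≤ b k) →
        ∑ k, (b k - ∑ i, A k i * z0 i) ^ 2 ≤ ∑ k, (b k - ∑ i, A k i * z i) ^ 2 := by
  rcases Nat.eq_zero_or_pos n with hn | hn
  · exfalso
    apply hcone
    subst hn
    exact ⟨0, fun i => le_rfl, fun k => k.elim0⟩
  haveI : Nonempty (Fin n) := ⟨⟨0, hn⟩⟩
  set i0 : Fin n := ⟨0, hn⟩ with hi0
  -- every column has a positive entry
  have hex : ∀ i, ∃ k, 0 < A k i := by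
    intro i
    by_contra h
    push_neg at h
    have hz : ∑ k, A k i = 0 :=
      Finset.sum_eq_zero fun k _ => le_antisymm (h k) (hA k i)
    have := hcol i
    rw [hz] at this
    exact lt_irrefl 0 this
  choose K hK using hex
  set C : Fin n → ℝ := fun i => b (K i) / A (K i) i with hC
  set S : Set (Fin n → ℝ) :=
    {z | (∀ i, 0 ≤ z i) ∧ ∀ k, ∑ i, A k i * z i ≤ b k} with hS
  set f : (Fin n → ℝ) → ℝ := fun z => ∑ k, (b k - ∑ i, A k i * z i) ^ 2 with hf
  have hsub : S ⊆ Set.Icc 0 C := by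
    rintro z ⟨hz1, hz2⟩
    constructor
    · intro i; exact hz1 i
    · intro i
      have h1 : A (K i) i * z i ≤ ∑ j, A (K i) j * z j := by
        apply Finset.single_le_sum (f := fun j => A (K i) j * z j)
        · intro j _
          exact mul_nonneg (hA _ _) (hz1 j)
        · exact Finset.mem_univ i
      have h2 : A (K i) i * z i ≤ b (K i) := h1.trans (hz2 (K i))
      rw [hC]
      rw [le_div_iff₀ (hK i)]
      linarith [h2]
  have hSclosed : IsClosed S := by
    have : S = (⋂ i, {z : Fin n → ℝ | 0 ≤ z i}) ∩
        ⋂ k, {z : Fin n → ℝ | ∑ i, A k i * z i ≤ b k} := by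
      ext z
      simp [hS, Set.mem_iInter, Set.mem_setOf_eq]
    rw [this]
    exact (isClosed_iInter fun i =>
        isClosed_le continuous_const (continuous_apply i)).inter
      (isClosed_iInter fun k =>
        isClosed_le (continuous_finset_sum _ fun i _ =>
          continuous_const.mul (continuous_apply i)) continuous_const)
  have hScompact : IsCompact S :=
    (isCompact_Icc (a := (0 : Fin n → ℝ)) (b := C)).of_isClosed_subset hSclosed hsub
  have h0S : (0 : Fin n → ℝ) ∈ S := by
    constructor
    · intro i; exact le_rfl
    · intro k; simp [(hb k).le]
  have hfc : Continuous f := by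
    apply continuous_finset_sum
    intro k _
    exact ((continuous_const.sub (continuous_finset_sum _ fun i _ =>
      continuous_const.mul (continuous_apply i))).pow 2)
  obtain ⟨z0, hz0S, hmin⟩ := hScompact.exists_isMinOn ⟨0, h0S⟩ hfc.continuousOn
  refine ⟨z0, hz0S.1, hz0S.2, ?_, fun z hz1 hz2 => isMinOn_iff.mp hmin z ⟨hz1, hz2⟩⟩
  -- tightness
  by_contra hc
  push_neg at hc
  set d : Fin n → ℝ := fun k => b k - ∑ i, A k i * z0 i with hd
  have hdpos : ∀ k, 0 < d k := by
    intro k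
    have h1 := hz0S.2 k
    have h2 : ∑ i, A k i * z0 i < b k := lt_of_le_of_ne h1 (hc k)
    simp only [hd]
    linarith
  set a : Fin n → ℝ := fun k => A k i0 with ha
  obtain ⟨k0, hk0⟩ : ∃ k, 0 < a k := ⟨K i0, hK i0⟩
  set S1 : ℝ := ∑ k, d k * a k with hS1
  set S2 : ℝ := ∑ k, a k ^ 2 with hS2
  have hS1pos : 0 < S1 := by
    apply Finset.sum_pos' (fun k _ => mul_nonneg (hdpos k).le (hA k i0))
    exact ⟨k0, Finset.mem_univ k0, mul_pos (hdpos k0) hk0⟩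
  have hS2pos : 0 < S2 := by
    apply Finset.sum_pos' (fun k _ => sq_nonneg _)
    exact ⟨k0, Finset.mem_univ k0, pow_pos hk0 2⟩
  set t1 : ℝ := Finset.univ.inf' Finset.univ_nonempty (fun k => d k / (a k + 1)) with ht1
  have ht1pos : 0 < t1 := by
    rw [ht1, Finset.lt_inf'_iff]
    intro k _
    exact div_pos (hdpos k) (by have := hA k i0; simp only [ha]; linarith)
  set t : ℝ := min t1 (S1 / S2) with ht
  have htpos : 0 < t := lt_min ht1pos (div_pos hS1pos hS2pos)
  have htfeas : ∀ k, t * a k < d k := by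
    intro k
    have h1 : t ≤ d k / (a k + 1) :=
      (min_le_left _ _).trans (Finset.inf'_le _ (Finset.mem_univ k))
    have hak : 0 ≤ a k := hA k i0
    have h2 : t * (a k + 1) ≤ d k := by
      rw [← le_div_iff₀ (by linarith)]
      exact h1
    nlinarith
  set z1 : Fin n → ℝ := fun i => z0 i + if i = i0 then t else 0 with hz1
  have hAz1 : ∀ k, ∑ i, A k i * z1 i = (∑ i, A k i * z0 i) + t * a k := by
    intro k
    simp only [hz1, mul_add, Finset.sum_add_distrib, mul_ite, mul_zero]
    rw [Finset.sum_ite_eq' Finset.univ i0 (fun i => A k i * t)]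
    simp [ha, mul_comm]
  have hz1S : z1 ∈ S := by
    constructor
    · intro i
      simp only [hz1]
      have := hz0S.1 i
      split_ifs <;> linarith
    · intro k
      rw [hAz1 k]
      have := htfeas k
      simp only [hd] at this
      linarith
  have hfz1 : f z1 = ∑ k, (d k - t * a k) ^ 2 := by
    apply Finset.sum_congr rfl
    intro k _
    rw [hAz1 k]
    simp only [hd]
    ring
  have hexpand : ∑ k, (d k - t * a k) ^ 2
      = (∑ k, d k ^ 2) - 2 * t * S1 + t ^ 2 * S2 := by
    rw [hS1, hS2, Finset.mul_sum, Finset.mul_sum, ← Finset.sum_sub_distrib,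
      ← Finset.sum_add_distrib]
    apply Finset.sum_congr rfl
    intro k _
    ring
  have hfz0 : f z0 = ∑ k, d k ^ 2 := by
    apply Finset.sum_congr rfl
    intro k _
    simp [hd]
  have htS : t * S2 ≤ S1 := by
    have h1 : t ≤ S1 / S2 := min_le_right _ _
    rw [← le_div_iff₀ hS2pos]
    exact h1
  have hlt : f z1 < f z0 := by
    rw [hfz1, hexpand, hfz0]
    have h2 : t ^ 2 * S2 ≤ t * S1 := by
      have : t * (t * S2) ≤ t * S1 := mul_le_mul_of_nonneg_left htS htpos.le
      nlinarith
    nlinarith [mul_pos htpos hS1pos]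
  exact absurd (isMinOn_iff.mp hmin z1 hz1S) (not_le.mpr hlt)
end

section
/- Let A be an n×n nonnegative irreducible productive matrix and x > 0 with (I−A)x > 0 componentwise. Define the taxation vector π by 1 − π_i = b·(Σ_j a_{ij} x_j)/x_i for a fixed b with 0 < b < min_i x_i/(Σ_j a_{ij} x_j). Then 0 < π_i < 1 for all i, and for any strictly positive p⁰ satisfying p⁰_i/(Σ_s a_{si} p⁰_s) = x_i/(Σ_j a_{ij} x_j), the equation Σ_i a_{ki} (1−π_i) x_i p⁰_i / (Σ_s a_{si} p⁰_s) = (1−π_k) x_k holds for all k. -/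
theorem stmt19 {n : ℕ} (A : Matrix (Fin n) (Fin n) ℝ)
    (hA : ∀ i j, 0 ≤ A i j) (hirr : MatIrreducible A) (hprod : Productive A)
    (x : Fin n → ℝ) (hx : ∀ i, 0 < x i)
    (hsurplus : ∀ i, 0 < x i - ∑ j, A i j * x j)
    (b : ℝ) (hb : 0 < b) (hbmin : ∀ i, b < x i / ∑ j, A i j * x j)
    (π : Fin n → ℝ) (hπ : ∀ i, 1 - π i = b * (∑ j, A i j * x j) / x i) :
    (∀ i, 0 < π i ∧ π i < 1) ∧
    ∀ p : Fin n → ℝ, (∀ i, 0 < p i) →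
      (∀ i, p i / (∑ s, A s i * p s) = x i / (∑ j, A i j * x j)) →
      ∀ k, ∑ i, A k i * ((1 - π i) * x i * p i / (∑ s, A s i * p s)) =
        (1 - π k) * x k := by
  have hS : ∀ i, 0 < ∑ j, A i j * x j := by
    intro i
    obtain ⟨m, hm, hpos⟩ := hirr i i
    rcases (Finset.sum_nonneg fun j _ => mul_nonneg (hA i j) (hx j).le).lt_or_eq with h | h
    · exact h
    · exfalso
      have hrow : ∀ j, A i j = 0 := by
        intro j
        have := (Finset.sum_eq_zero_iff_of_nonneg
          (fun j _ => mul_nonneg (hA i j) (hx j).le)).mp h.symm j (Finset.mem_univ j)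
        exact (mul_eq_zero.mp this).resolve_right (hx j).ne'
      obtain ⟨m', rfl⟩ := Nat.exists_eq_succ_of_ne_zero hm.ne'
      rw [pow_succ', Matrix.mul_apply] at hpos
      simp [hrow] at hpos
  have key : ∀ i, (1 - π i) * x i = b * (∑ j, A i j * x j) := by
    intro i
    rw [hπ i, div_mul_cancel₀ _ (hx i).ne']
  refine ⟨fun i => ?_, fun p hp hratio k => ?_⟩
  · constructor
    · have h1 : 1 - π i < 1 := by
        rw [hπ i]
        rw [div_lt_one (hx i)]
        have := hbmin i
        rw [lt_div_iff₀ (hS i)] at this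
        linarith [this]
      linarith
    · have h2 : 0 < 1 - π i := by
        rw [hπ i]
        exact div_pos (mul_pos hb (hS i)) (hx i)
      linarith
  · have term : ∀ i, (1 - π i) * x i * p i / (∑ s, A s i * p s) = b * x i := by
      intro i
      rw [key i, mul_div_assoc, hratio i]
      field_simp [(hS i).ne']
    calc ∑ i, A k i * ((1 - π i) * x i * p i / (∑ s, A s i * p s))
        = ∑ i, A k i * (b * x i) := by
          exact Finset.sum_congr rfl fun i _ => by rw [term i]
      _ = b * ∑ j, A k j * x j := by
          rw [Finset.mul_sum]; exact Finset.sum_congr rfl fun i _ => by ring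
      _ = (1 - π k) * x k := (key k).symm
end
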